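/- If a connected hole-free particle configuration σ on the triangular lattice has perimeter k, then the boundary of the corresponding union of hexagonal faces in the dual hexagonal lattice is a self-avoiding polygon with exactly 2k + 6 edges. -/

import Mathlib

open Finset

/-- The six neighbor displacement vectors of the triangular lattice Γ, realized on ℤ × ℤ. -/
def triNbrs : List (ℤ × ℤ) := [(1,0), (-1,0), (0,1), (0,-1), (1,1), (-1,-1)]

/-- Translation of a lattice point by a displacement. -/
def shift (v d : ℤ × ℤ) : ℤ × ℤ := (v.1 + d.1, v.2 + d.2)

/-- Adjacency in the triangular lattice Γ. -/
def TriAdj (v w : ℤ × ℤ) : Prop := (w.1 - v.1, w.2 - v.2) ∈ triNbrs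

/-- A particle configuration: a finite set of occupied vertices of Γ. -/
abbrev Config := Finset (ℤ × ℤ)

/-- A configuration is connected if it is nonempty and any two occupied vertices are
joined by a path through occupied vertices. -/
def ConnectedConfig (σ : Config) : Prop :=
  σ.Nonempty ∧ ∀ v ∈ σ, ∀ w ∈ σ,
    Relation.ReflTransGen (fun a b => TriAdj a b ∧ a ∈ σ ∧ b ∈ σ) v w

/-- The connected component of a vertex within the set of unoccupied vertices. -/
def compComponent (σ : Config) (v : ℤ × ℤ) : Set (ℤ × ℤ) :=
  {w | Relation.ReflTransGen (fun a b => TriAdj a b ∧ a ∉ σ ∧ b ∉ σ) v w}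

/-- A hole is a finite maximal component of unoccupied vertices; σ is hole-free
exactly when every unoccupied vertex lies in an infinite component of unoccupied vertices. -/
def HoleFree (σ : Config) : Prop := ∀ v, v ∉ σ → (compComponent σ v).Infinite

/-- Number of triangles of σ: lattice faces with all three vertices occupied.
The faces of Γ are the upward faces {v, v+(1,0), v+(1,1)} and the downward faces
{v, v+(0,1), v+(1,1)}. -/
def triangles (σ : Config) : ℕ :=
  (σ.filter (fun v => shift v (1,0) ∈ σ ∧ shift v (1,1) ∈ σ)).card +
  (σ.filter (fun v => shift v (0,1) ∈ σ ∧ shift v (1,1) ∈ σ)).card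

/-- Number of edges of σ: lattice edges with both endpoints occupied. -/
def edges (σ : Config) : ℕ :=
  (σ.filter (fun v => shift v (1,0) ∈ σ)).card +
  (σ.filter (fun v => shift v (0,1) ∈ σ)).card +
  (σ.filter (fun v => shift v (1,1) ∈ σ)).card

/-- Perimeter of σ: the length of the boundary walk around σ.  For a connected
hole-free configuration, the boundary walk traverses each occupied edge once for
each of its two adjacent lattice faces that is not fully occupied (so an edge
traversed twice is counted twice).  The two faces adjacent to the edge v–v+(1,0)
have third vertices v+(1,1) and v+(0,-1); those adjacent to v–v+(0,1) have third
vertices v+(1,1) and v+(-1,0); those adjacent to v–v+(1,1) have third vertices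
v+(1,0) and v+(0,1). -/
def perim (σ : Config) : ℕ :=
  (∑ v ∈ σ.filter (fun v => shift v (1,0) ∈ σ),
    ((if shift v (1,1) ∈ σ then 0 else 1) + (if shift v (0,-1) ∈ σ then 0 else 1))) +
  (∑ v ∈ σ.filter (fun v => shift v (0,1) ∈ σ),
    ((if shift v (1,1) ∈ σ then 0 else 1) + (if shift v (-1,0) ∈ σ then 0 else 1))) +
  (∑ v ∈ σ.filter (fun v => shift v (1,1) ∈ σ),
    ((if shift v (1,0) ∈ σ then 0 else 1) + (if shift v (0,1) ∈ σ then 0 else 1)))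

/-- Lexicographic order on lattice points, used to normalize configurations up to
translation. -/
def lexLe (a b : ℤ × ℤ) : Prop := a.1 < b.1 ∨ (a.1 = b.1 ∧ a.2 ≤ b.2)

/-- A configuration is normalized if its lexicographically least vertex is the origin;
each translation equivalence class of configurations contains exactly one normalized
representative, so normalized configurations count configurations up to translation. -/
def Normalized (σ : Config) : Prop := ((0,0) : ℤ × ℤ) ∈ σ ∧ ∀ v ∈ σ, lexLe (0,0) v

/-- A function is subexponential if it is eventually dominated by every exponential. -/
def Subexp (f : ℕ → ℝ) : Prop := ∀ c : ℝ, 1 < c → ∀ᶠ k in Filter.atTop, f k ≤ c ^ k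

/-- The number of edges of the boundary of A_σ, the union of the hexagonal faces of
the dual hexagonal lattice corresponding to occupied vertices of σ.  An edge of the
hexagonal lattice corresponds to an edge of the triangular lattice between the two
vertices whose hexagons it separates; it lies on the boundary of A_σ exactly when
one of these vertices is occupied and the other is not. -/
def hexBoundaryEdges (σ : Config) : ℕ :=
  ∑ v ∈ σ, triNbrs.countP (fun d => decide (shift v d ∉ σ))

section PartA

variable (σ : Config)

lemma shift_cancel (w d : ℤ × ℤ) : shift (shift w (-d.1, -d.2)) d = w := by
  simp [shift]

lemma shift_inj (d : ℤ × ℤ) : Function.Injective (fun v => shift v d) := by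
  intro a b h
  simp only [shift, Prod.mk.injEq] at h
  exact Prod.ext (by omega) (by omega)

lemma sum_ite01 (s : Finset (ℤ × ℤ)) (Q : ℤ × ℤ → Prop) [DecidablePred Q] :
    (∑ v ∈ s, (if Q v then (0:ℕ) else 1)) = (s.filter (fun v => ¬ Q v)).card := by
  rw [Finset.card_filter]
  exact Finset.sum_congr rfl (fun v _ => by by_cases h : Q v <;> simp [h])

lemma filter_split (s : Finset (ℤ × ℤ)) (Q : ℤ × ℤ → Prop) [DecidablePred Q] :
    (s.filter Q).card + (s.filter (fun v => ¬ Q v)).card = s.card := by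
  rw [Finset.card_filter_add_card_filter_not]

lemma card_bij_shift (P₁ P₂ : ℤ × ℤ → Prop) [DecidablePred P₁] [DecidablePred P₂] (d : ℤ × ℤ)
    (h₁ : ∀ v ∈ σ, P₁ v → shift v d ∈ σ ∧ P₂ (shift v d))
    (h₂ : ∀ w ∈ σ, P₂ w → shift w (-d.1, -d.2) ∈ σ ∧ P₁ (shift w (-d.1, -d.2))) :
    (σ.filter P₁).card = (σ.filter P₂).card := by
  apply Finset.card_bij (fun v _ => shift v d)
  · intro a ha
    simp only [Finset.mem_filter] at *
    exact ⟨(h₁ a ha.1 ha.2).1, (h₁ a ha.1 ha.2).2⟩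
  · intro a _ b _ hab
    exact shift_inj d hab
  · intro w hw
    simp only [Finset.mem_filter] at hw ⊢
    refine ⟨shift w (-d.1, -d.2), ⟨(h₂ w hw.1 hw.2).1, (h₂ w hw.1 hw.2).2⟩, shift_cancel w d⟩

end PartA
section PartA2

variable (σ : Config)

lemma sum_ite10 (s : Finset (ℤ × ℤ)) (Q : ℤ × ℤ → Prop) [DecidablePred Q] :
    (∑ v ∈ s, (if Q v then (1:ℕ) else 0)) = (s.filter Q).card := (Finset.card_filter _ _).symm

lemma hex_plus : hexBoundaryEdges σ + 2 * edges σ = 6 * σ.card := by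
  have hsum : hexBoundaryEdges σ = ∑ v ∈ σ,
      ((if shift v (1,0) ∉ σ then (1:ℕ) else 0) + ((if shift v (-1,0) ∉ σ then 1 else 0) +
       ((if shift v (0,1) ∉ σ then 1 else 0) + ((if shift v (0,-1) ∉ σ then 1 else 0) +
       ((if shift v (1,1) ∉ σ then 1 else 0) + (if shift v (-1,-1) ∉ σ then 1 else 0)))))) := by
    refine Finset.sum_congr rfl fun v _ => ?_
    simp [triNbrs, List.countP_cons]
    omega
  rw [hsum, Finset.sum_add_distrib, Finset.sum_add_distrib, Finset.sum_add_distrib,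
    Finset.sum_add_distrib, Finset.sum_add_distrib, sum_ite10, sum_ite10, sum_ite10,
    sum_ite10, sum_ite10, sum_ite10]
  have k1 := filter_split σ (fun v => shift v (1,0) ∈ σ)
  have k2 := filter_split σ (fun v => shift v (-1,0) ∈ σ)
  have k3 := filter_split σ (fun v => shift v (0,1) ∈ σ)
  have k4 := filter_split σ (fun v => shift v (0,-1) ∈ σ)
  have k5 := filter_split σ (fun v => shift v (1,1) ∈ σ)
  have k6 := filter_split σ (fun v => shift v (-1,-1) ∈ σ)
  have n1 : (σ.filter (fun v => shift v (1,0) ∈ σ)).card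
      = (σ.filter (fun v => shift v (-1,0) ∈ σ)).card := by
    apply card_bij_shift σ _ _ (1,0) <;> intro v hv h <;>
      exact ⟨by simpa [shift] using h, by simpa [shift] using hv⟩
  have n2 : (σ.filter (fun v => shift v (0,1) ∈ σ)).card
      = (σ.filter (fun v => shift v (0,-1) ∈ σ)).card := by
    apply card_bij_shift σ _ _ (0,1) <;> intro v hv h <;>
      exact ⟨by simpa [shift] using h, by simpa [shift] using hv⟩
  have n3 : (σ.filter (fun v => shift v (1,1) ∈ σ)).card
      = (σ.filter (fun v => shift v (-1,-1) ∈ σ)).card := by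
    apply card_bij_shift σ _ _ (1,1) <;> intro v hv h <;>
      exact ⟨by simpa [shift] using h, by simpa [shift] using hv⟩
  unfold edges
  simp only [Finset.filter_not] at *
  omega

end PartA2
section PartA3

variable (σ : Config)

lemma perim_plus : perim σ + 3 * triangles σ = 2 * edges σ := by
  unfold perim edges triangles
  rw [Finset.sum_add_distrib, Finset.sum_add_distrib, Finset.sum_add_distrib,
    sum_ite01, sum_ite01, sum_ite01, sum_ite01, sum_ite01, sum_ite01,
    Finset.filter_filter, Finset.filter_filter, Finset.filter_filter,
    Finset.filter_filter, Finset.filter_filter, Finset.filter_filter]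
  -- split counts: for each edge-direction P and face Q:
  have split : ∀ (P Q : ℤ × ℤ → Prop) [DecidablePred P] [DecidablePred Q],
      (σ.filter (fun v => P v ∧ Q v)).card + (σ.filter (fun v => P v ∧ ¬ Q v)).card
        = (σ.filter P).card := by
    intro P Q _ _
    rw [← Finset.filter_filter, ← Finset.filter_filter]
    exact filter_split _ Q
  have s1 := split (fun v => shift v (1,0) ∈ σ) (fun v => shift v (1,1) ∈ σ)
  have s2 := split (fun v => shift v (1,0) ∈ σ) (fun v => shift v (0,-1) ∈ σ)
  have s3 := split (fun v => shift v (0,1) ∈ σ) (fun v => shift v (1,1) ∈ σ)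
  have s4 := split (fun v => shift v (0,1) ∈ σ) (fun v => shift v (-1,0) ∈ σ)
  have s5 := split (fun v => shift v (1,1) ∈ σ) (fun v => shift v (1,0) ∈ σ)
  have s6 := split (fun v => shift v (1,1) ∈ σ) (fun v => shift v (0,1) ∈ σ)
  -- translated triple identities
  have t1 : (σ.filter (fun v => shift v (1,0) ∈ σ ∧ shift v (0,-1) ∈ σ)).card
      = (σ.filter (fun v => shift v (0,1) ∈ σ ∧ shift v (1,1) ∈ σ)).card := by
    apply card_bij_shift σ _ _ (0,-1) <;> intro v hv h <;>
      exact ⟨by first | simpa [shift] using h.1 | simpa [shift] using h.2,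
        by constructor <;> simp [shift] <;>
        first
          | simpa [shift] using hv
          | simpa [shift] using h.1
          | simpa [shift] using h.2⟩
  have t2 : (σ.filter (fun v => shift v (0,1) ∈ σ ∧ shift v (-1,0) ∈ σ)).card
      = (σ.filter (fun v => shift v (1,0) ∈ σ ∧ shift v (1,1) ∈ σ)).card := by
    apply card_bij_shift σ _ _ (-1,0) <;> intro v hv h <;>
      exact ⟨by first | simpa [shift] using h.1 | simpa [shift] using h.2,
        by constructor <;> simp [shift] <;>
        first
          | simpa [shift] using hv
          | simpa [shift] using h.1
          | simpa [shift] using h.2⟩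
  have t3 : (σ.filter (fun v => shift v (1,1) ∈ σ ∧ shift v (1,0) ∈ σ)).card
      = (σ.filter (fun v => shift v (1,0) ∈ σ ∧ shift v (1,1) ∈ σ)).card := by
    congr 1; apply Finset.filter_congr; intro v _; tauto
  have t4 : (σ.filter (fun v => shift v (1,1) ∈ σ ∧ shift v (0,1) ∈ σ)).card
      = (σ.filter (fun v => shift v (0,1) ∈ σ ∧ shift v (1,1) ∈ σ)).card := by
    congr 1; apply Finset.filter_congr; intro v _; tauto
  omega

end PartA3
section PartB1

lemma shift_eq_iff (w v d : ℤ × ℤ) : shift w d = v ↔ w = shift v (-d.1, -d.2) := by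
  simp only [shift, Prod.ext_iff]
  constructor <;> rintro ⟨h1, h2⟩ <;> constructor <;> omega

lemma shift_cancel' (v d : ℤ × ℤ) : shift (shift v (-d.1, -d.2)) d = v := shift_cancel v d

variable (σ : Config) (v : ℤ × ℤ)

lemma erase_filter_dir (d : ℤ × ℤ) (hvd : shift v d ∉ σ) :
    ((σ.erase v).filter (fun w => shift w d ∈ σ.erase v))
      = (σ.filter (fun w => shift w d ∈ σ)).erase (shift v (-d.1, -d.2)) := by
  ext w
  simp only [Finset.mem_filter, Finset.mem_erase]
  constructor
  · rintro ⟨⟨hwv, hw⟩, hdv, hd⟩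
    refine ⟨fun he => hdv ?_, hw, hd⟩
    rw [← shift_eq_iff] at he; exact he
  · rintro ⟨hne, hw, hd⟩
    refine ⟨⟨fun he => hvd (he ▸ hd), hw⟩, fun he => hne ((shift_eq_iff _ _ _).1 he), hd⟩

lemma card_filter_dir (hv : v ∈ σ) (d : ℤ × ℤ) (hvd : shift v d ∉ σ) :
    (σ.filter (fun w => shift w d ∈ σ)).card
      = ((σ.erase v).filter (fun w => shift w d ∈ σ.erase v)).card
        + (if shift v (-d.1, -d.2) ∈ σ then 1 else 0) := by
  rw [erase_filter_dir σ v d hvd]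
  by_cases h : shift v (-d.1, -d.2) ∈ σ
  · have hmem : shift v (-d.1, -d.2) ∈ σ.filter (fun w => shift w d ∈ σ) := by
      simp only [Finset.mem_filter, shift_cancel']
      exact ⟨h, hv⟩
    rw [Finset.card_erase_of_mem hmem, if_pos h,
      Nat.sub_add_cancel (Finset.card_pos.2 ⟨_, hmem⟩)]
  · rw [Finset.erase_eq_of_notMem (fun hmem => h (Finset.mem_filter.1 hmem).1), if_neg h,
      Nat.add_zero]

end PartB1
section PartB2

variable (σ : Config) (v : ℤ × ℤ)

lemma lex_not_mem (hmax : ∀ w ∈ σ, toLex w ≤ toLex v) (d : ℤ × ℤ)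
    (hd : 0 < d.1 ∨ (d.1 = 0 ∧ 0 < d.2)) : shift v d ∉ σ := by
  intro hm
  have := hmax _ hm
  rw [Prod.Lex.toLex_le_toLex] at this
  simp only [shift] at this
  obtain h | h := this <;> simp at h <;> omega

lemma shift_assoc (v d e : ℤ × ℤ) : shift (shift v d) e = shift v (d.1 + e.1, d.2 + e.2) := by
  simp [shift, Prod.ext_iff]; constructor <;> ring

lemma erase_filter_tri (d₁ d₂ : ℤ × ℤ) (h1 : shift v d₁ ∉ σ)
    (h2 : shift v (d₂.1 - d₁.1, d₂.2 - d₁.2) ∉ σ) :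
    ((σ.erase v).filter (fun w => shift w d₁ ∈ σ.erase v ∧ shift w d₂ ∈ σ.erase v))
      = (σ.filter (fun w => shift w d₁ ∈ σ ∧ shift w d₂ ∈ σ)).erase (shift v (-d₂.1, -d₂.2)) := by
  ext w
  simp only [Finset.mem_filter, Finset.mem_erase]
  constructor
  · rintro ⟨⟨hwv, hw⟩, ⟨h1v, hm1⟩, ⟨h2v, hm2⟩⟩
    exact ⟨fun he => h2v (by rw [he]; exact shift_cancel' v d₂), hw, hm1, hm2⟩
  · rintro ⟨hne, hw, hm1, hm2⟩
    refine ⟨⟨fun he => h1 (he ▸ hm1), hw⟩, ⟨?_, hm1⟩,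
      ⟨fun he => hne ((shift_eq_iff _ _ _).1 he), hm2⟩⟩
    intro he
    have hw' : w = shift v (-d₁.1, -d₁.2) := (shift_eq_iff _ _ _).1 he
    apply h2
    rw [hw', shift_assoc] at hm2
    convert hm2 using 2 <;> ring
  
lemma card_filter_tri (hv : v ∈ σ) (d₁ d₂ : ℤ × ℤ) (h1 : shift v d₁ ∉ σ)
    (h2 : shift v (d₂.1 - d₁.1, d₂.2 - d₁.2) ∉ σ) :
    (σ.filter (fun w => shift w d₁ ∈ σ ∧ shift w d₂ ∈ σ)).card
      = ((σ.erase v).filter (fun w => shift w d₁ ∈ σ.erase v ∧ shift w d₂ ∈ σ.erase v)).card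
        + (if shift v (-d₂.1, -d₂.2) ∈ σ ∧ shift v (d₁.1 - d₂.1, d₁.2 - d₂.2) ∈ σ
            then 1 else 0) := by
  rw [erase_filter_tri σ v d₁ d₂ h1 h2]
  by_cases h : shift v (-d₂.1, -d₂.2) ∈ σ ∧ shift v (d₁.1 - d₂.1, d₁.2 - d₂.2) ∈ σ
  · have hmem : shift v (-d₂.1, -d₂.2) ∈ σ.filter (fun w => shift w d₁ ∈ σ ∧ shift w d₂ ∈ σ) := by
      simp only [Finset.mem_filter, shift_assoc]
      have e1 : shift v (-d₂.1 + d₂.1, -d₂.2 + d₂.2) = v := by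
        simp only [shift, Prod.ext_iff]; constructor <;> ring
      rw [e1]
      refine ⟨h.1, ?_, hv⟩
      convert h.2 using 2 <;> ring
    rw [Finset.card_erase_of_mem hmem, if_pos h,
      Nat.sub_add_cancel (Finset.card_pos.2 ⟨_, hmem⟩)]
  · rw [if_neg h, Nat.add_zero, Finset.erase_eq_of_notMem]
    intro hmem
    simp only [Finset.mem_filter, shift_assoc] at hmem
    apply h
    refine ⟨hmem.1, ?_⟩
    convert hmem.2.1 using 2 <;> ring

end PartB2
section PartB3

variable (σ : Config) (v : ℤ × ℤ)

lemma counts_at_lexmax (hv : v ∈ σ) (hmax : ∀ w ∈ σ, toLex w ≤ toLex v) :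
    σ.card = (σ.erase v).card + 1
  ∧ edges σ = edges (σ.erase v)
      + ((if shift v (-1,0) ∈ σ then 1 else 0) + (if shift v (0,-1) ∈ σ then 1 else 0)
         + (if shift v (-1,-1) ∈ σ then 1 else 0))
  ∧ triangles σ = triangles (σ.erase v)
      + ((if shift v (-1,-1) ∈ σ ∧ shift v (0,-1) ∈ σ then 1 else 0)
         + (if shift v (-1,-1) ∈ σ ∧ shift v (-1,0) ∈ σ then 1 else 0)) := by
  have h10 : shift v (1,0) ∉ σ := lex_not_mem σ v hmax (1,0) (by norm_num)
  have h01 : shift v (0,1) ∉ σ := lex_not_mem σ v hmax (0,1) (by norm_num)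
  have h11 : shift v (1,1) ∉ σ := lex_not_mem σ v hmax (1,1) (by norm_num)
  refine ⟨?_, ?_, ?_⟩
  · rw [Finset.card_erase_of_mem hv, Nat.sub_add_cancel (Finset.card_pos.2 ⟨v, hv⟩)]
  · unfold edges
    rw [card_filter_dir σ v hv (1,0) h10, card_filter_dir σ v hv (0,1) h01,
      card_filter_dir σ v hv (1,1) h11]
    norm_num
    omega
  · unfold triangles
    rw [card_filter_tri σ v hv (1,0) (1,1) h10 (by norm_num; exact h01),
      card_filter_tri σ v hv (0,1) (1,1) h01 (by norm_num; exact h10)]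
    norm_num
    omega

end PartB3
section PartB4

/-- The occupied-adjacency relation. -/
def Rocc (σ : Config) (x y : ℤ × ℤ) : Prop := TriAdj x y ∧ x ∈ σ ∧ y ∈ σ

/-- The free-adjacency relation. -/
def Rfree (σ : Config) (x y : ℤ × ℤ) : Prop := TriAdj x y ∧ x ∉ σ ∧ y ∉ σ

lemma triAdj_iff (x y : ℤ × ℤ) : TriAdj x y ↔
    ((y.1 = x.1 + 1 ∧ y.2 = x.2) ∨ (y.1 = x.1 - 1 ∧ y.2 = x.2) ∨
     (y.1 = x.1 ∧ y.2 = x.2 + 1) ∨ (y.1 = x.1 ∧ y.2 = x.2 - 1) ∨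
     (y.1 = x.1 + 1 ∧ y.2 = x.2 + 1) ∨ (y.1 = x.1 - 1 ∧ y.2 = x.2 - 1)) := by
  simp only [TriAdj, triNbrs, List.mem_cons, List.not_mem_nil, or_false, Prod.ext_iff]
  omega

lemma triAdj_symm {x y : ℤ × ℤ} (h : TriAdj x y) : TriAdj y x := by
  rw [triAdj_iff] at h ⊢; omega

lemma triAdj_irrefl (x : ℤ × ℤ) : ¬ TriAdj x x := by
  simp [TriAdj, triNbrs, Prod.ext_iff]

lemma rocc_symm (σ : Config) : Symmetric (Rocc σ) := by
  rintro x y ⟨h, hx, hy⟩; exact ⟨triAdj_symm h, hy, hx⟩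

lemma rfree_symm (σ : Config) : Symmetric (Rfree σ) := by
  rintro x y ⟨h, hx, hy⟩; exact ⟨triAdj_symm h, hy, hx⟩

lemma rtg_symm {r : ℤ × ℤ → ℤ × ℤ → Prop} (h : Symmetric r) :
    Symmetric (Relation.ReflTransGen r) := fun a b hab =>
  haveI : Std.Symm r := ⟨fun x y hxy => h hxy⟩
  Std.Symm.symm a b hab

lemma comp_mono {σ₁ σ₂ : Config} (h : σ₁ ⊆ σ₂) (w : ℤ × ℤ) :
    compComponent σ₂ w ⊆ compComponent σ₁ w := by
  intro x hx
  exact Relation.ReflTransGen.mono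
    (r := fun a b => TriAdj a b ∧ a ∉ σ₂ ∧ b ∉ σ₂) (p := fun a b => TriAdj a b ∧ a ∉ σ₁ ∧ b ∉ σ₁)
    (fun a b ⟨ha, hb, hc⟩ =>
    ⟨ha, fun hm => hb (h hm), fun hm => hc (h hm)⟩) _ _ hx

lemma comp_step {σ : Config} {w x : ℤ × ℤ} (h : Rfree σ w x) :
    compComponent σ x ⊆ compComponent σ w := by
  intro y hy
  exact Relation.ReflTransGen.trans (Relation.ReflTransGen.single h) hy

lemma mem_comp_self (σ : Config) (w : ℤ × ℤ) : w ∈ compComponent σ w :=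
  Relation.ReflTransGen.refl

variable (σ : Config) (v : ℤ × ℤ)

/-- classification of occupied neighbours of the lex-max vertex -/
lemma nbr_lex (hmax : ∀ w ∈ σ, toLex w ≤ toLex v) {x : ℤ × ℤ}
    (hadj : TriAdj x v) (hx : x ∈ σ) :
    x = shift v (-1,0) ∨ x = shift v (0,-1) ∨ x = shift v (-1,-1) := by
  have hlex := hmax x hx
  rw [Prod.Lex.toLex_le_toLex] at hlex
  rw [triAdj_iff] at hadj
  simp only [shift, Prod.ext_iff]
  obtain h | h := hlex
  · omega
  · omega

/-- in the good case, the three potential lower neighbours are joined inside σ.erase v -/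
lemma arc_conn (hgood : ¬(shift v (-1,0) ∈ σ ∧ shift v (0,-1) ∈ σ ∧ shift v (-1,-1) ∉ σ)) :
    ∀ y, (y = shift v (-1,0) ∨ y = shift v (0,-1) ∨ y = shift v (-1,-1)) → y ∈ σ →
    Relation.ReflTransGen (Rocc (σ.erase v))
      (if shift v (-1,-1) ∈ σ then shift v (-1,-1)
       else if shift v (-1,0) ∈ σ then shift v (-1,0) else shift v (0,-1)) y := by
  intro y hy hyσ
  have hane : shift v (-1,0) ≠ v := by simp [shift, Prod.ext_iff]
  have hbne : shift v (0,-1) ≠ v := by simp [shift, Prod.ext_iff]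
  have hcne : shift v (-1,-1) ≠ v := by simp [shift, Prod.ext_iff]
  have hca : TriAdj (shift v (-1,-1)) (shift v (-1,0)) := by
    simp [TriAdj, triNbrs, shift, Prod.ext_iff]
  have hcb : TriAdj (shift v (-1,-1)) (shift v (0,-1)) := by
    simp [TriAdj, triNbrs, shift, Prod.ext_iff]
  by_cases hc : shift v (-1,-1) ∈ σ
  · rw [if_pos hc]
    obtain rfl | rfl | rfl := hy
    · exact Relation.ReflTransGen.single ⟨hca, Finset.mem_erase.2 ⟨hcne, hc⟩,
        Finset.mem_erase.2 ⟨hane, hyσ⟩⟩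
    · exact Relation.ReflTransGen.single ⟨hcb, Finset.mem_erase.2 ⟨hcne, hc⟩,
        Finset.mem_erase.2 ⟨hbne, hyσ⟩⟩
    · exact Relation.ReflTransGen.refl
  · rw [if_neg hc]
    by_cases ha : shift v (-1,0) ∈ σ
    · rw [if_pos ha]
      obtain rfl | rfl | rfl := hy
      · exact Relation.ReflTransGen.refl
      · exact absurd ⟨ha, hyσ, hc⟩ hgood
      · exact absurd hyσ hc
    · rw [if_neg ha]
      obtain rfl | rfl | rfl := hy
      · exact absurd hyσ ha
      · exact Relation.ReflTransGen.refl
      · exact absurd hyσ hc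

/-- good-case rerouting around the removed vertex -/
lemma good_reroute (hmax : ∀ w ∈ σ, toLex w ≤ toLex v)
    (hgood : ¬(shift v (-1,0) ∈ σ ∧ shift v (0,-1) ∈ σ ∧ shift v (-1,-1) ∉ σ)) :
    ∀ x y, Relation.ReflTransGen (Rocc σ) x y → x ≠ v → y ≠ v →
      Relation.ReflTransGen (Rocc (σ.erase v)) x y := by
  set s₀ := (if shift v (-1,-1) ∈ σ then shift v (-1,-1)
       else if shift v (-1,0) ∈ σ then shift v (-1,0) else shift v (0,-1)) with hs₀
  have key : ∀ x y, Relation.ReflTransGen (Rocc σ) x y →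
      Relation.ReflTransGen (Rocc (σ.erase v))
        (if x = v then s₀ else x) (if y = v then s₀ else y) := by
    intro x y h
    induction h with
    | refl => exact Relation.ReflTransGen.refl
    | @tail z w _ hstep ih =>
        refine Relation.ReflTransGen.trans ih ?_
        obtain ⟨hadj, hzσ, hwσ⟩ := hstep
        by_cases hz : z = v <;> by_cases hw : w = v
        · rw [hz, hw] at hadj; exact absurd hadj (triAdj_irrefl v)
        · rw [if_pos hz, if_neg hw]
          rw [hz] at hadj
          exact arc_conn σ v hgood w (nbr_lex σ v hmax (triAdj_symm hadj) hwσ) hwσ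
        · rw [if_neg hz, if_pos hw]
          rw [hw] at hadj
          exact (rtg_symm (rocc_symm _)) <|
            arc_conn σ v hgood z (nbr_lex σ v hmax hadj hzσ) hzσ
        · rw [if_neg hz, if_neg hw]
          exact Relation.ReflTransGen.single
            ⟨hadj, Finset.mem_erase.2 ⟨hz, hzσ⟩, Finset.mem_erase.2 ⟨hw, hwσ⟩⟩
  intro x y h hx hy
  have := key x y h
  rwa [if_neg hx, if_neg hy] at this

end PartB4
section Parity

/-- crossing indicator of a step `w → w'` across the rightward ray of `p`
(the horizontal line at height `p.2 + 1/2`, to the right of `p`). -/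
def crossN (p w w' : ℤ × ℤ) : ℕ :=
  if (w.2 = p.2 ∧ w'.2 = p.2 + 1 ∧ p.1 ≤ w.1) ∨ (w.2 = p.2 + 1 ∧ w'.2 = p.2 ∧ p.1 ≤ w'.1)
  then 1 else 0

/-- total crossings of a walk (list of vertices) -/
def crossC (p : ℤ × ℤ) : List (ℤ × ℤ) → ℕ
  | w :: w' :: rest => crossN p w w' + crossC p (w' :: rest)
  | _ => 0

/-- walks in the triangular lattice -/
def IsWalk : List (ℤ × ℤ) → Prop
  | w :: w' :: rest => TriAdj w w' ∧ IsWalk (w' :: rest)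
  | _ => True

lemma isWalk_cons {w w' : ℤ × ℤ} {l : List (ℤ × ℤ)} :
    IsWalk (w :: w' :: l) ↔ TriAdj w w' ∧ IsWalk (w' :: l) := Iff.rfl

/-- generic telescoping parity lemma -/
lemma crossC_telescope (p q : ℤ × ℤ) (g : ℤ × ℤ → ℤ) (P : ℤ × ℤ → Prop)
    (hstep : ∀ w w', TriAdj w w' → P w → P w' →
      ((crossN p w w' : ℤ) + crossN q w w' + g w' - g w) % 2 = 0) :
    ∀ (l : List (ℤ × ℤ)) (w : ℤ × ℤ), IsWalk (w :: l) → (∀ x ∈ w :: l, P x) →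
      ((crossC p (w :: l) : ℤ) + crossC q (w :: l)
        + g ((w :: l).getLast (List.cons_ne_nil _ _)) - g w) % 2 = 0 := by
  intro l
  induction l with
  | nil => intro w _ _; simp [crossC]
  | cons w' l ih =>
      intro w hwalk hmem
      obtain ⟨hadj, hwalk'⟩ := (isWalk_cons).1 hwalk
      have h1 := hstep w w' hadj (hmem w (by simp)) (hmem w' (by simp))
      have h2 := ih w' hwalk' (fun x hx => hmem x (by simp at hx ⊢; tauto))
      rw [List.getLast_cons (List.cons_ne_nil _ _)]
      show ((↑(crossN p w w' + crossC p (w' :: l)) : ℤ)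
        + ↑(crossN q w w' + crossC q (w' :: l)) + _ - _) % 2 = 0
      push_cast at *
      omega

/-- the three basic adjacent-base-point parity steps -/
lemma step_right (p₁ p₂ : ℤ) (w w' : ℤ × ℤ) (hadj : TriAdj w w')
    (hw : w ≠ (p₁, p₂)) (hw' : w' ≠ (p₁, p₂)) :
    ((crossN (p₁, p₂) w w' : ℤ) + crossN (p₁ + 1, p₂) w w') % 2 = 0 := by
  rw [triAdj_iff] at hadj
  have h1 : ¬(w.1 = p₁ ∧ w.2 = p₂) := by simpa [Prod.ext_iff] using hw
  have h2 : ¬(w'.1 = p₁ ∧ w'.2 = p₂) := by simpa [Prod.ext_iff] using hw'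
  simp only [crossN]
  split_ifs <;> omega

set_option maxHeartbeats 2000000 in
lemma step_up (p₁ p₂ : ℤ) (w w' : ℤ × ℤ) (hadj : TriAdj w w')
    (hq : w ≠ (p₁, p₂ + 1)) (hq' : w' ≠ (p₁, p₂ + 1)) :
    ((crossN (p₁, p₂) w w' : ℤ) + crossN (p₁, p₂ + 1) w w'
      + (if w'.2 = p₂ + 1 ∧ p₁ ≤ w'.1 then (1:ℤ) else 0)
      - (if w.2 = p₂ + 1 ∧ p₁ ≤ w.1 then (1:ℤ) else 0)) % 2 = 0 := by
  rw [triAdj_iff] at hadj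
  have h1 : ¬(w.1 = p₁ ∧ w.2 = p₂ + 1) := by simpa [Prod.ext_iff] using hq
  have h2 : ¬(w'.1 = p₁ ∧ w'.2 = p₂ + 1) := by simpa [Prod.ext_iff] using hq'
  simp only [crossN]
  split_ifs <;> omega

set_option maxHeartbeats 2000000 in
lemma step_diag (p₁ p₂ : ℤ) (w w' : ℤ × ℤ) (hadj : TriAdj w w')
    (hp : w ≠ (p₁, p₂)) (hp' : w' ≠ (p₁, p₂))
    (hq : w ≠ (p₁ + 1, p₂ + 1)) (hq' : w' ≠ (p₁ + 1, p₂ + 1)) :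
    ((crossN (p₁, p₂) w w' : ℤ) + crossN (p₁ + 1, p₂ + 1) w w'
      + (if w'.2 = p₂ + 1 ∧ p₁ + 1 ≤ w'.1 then (1:ℤ) else 0)
      - (if w.2 = p₂ + 1 ∧ p₁ + 1 ≤ w.1 then (1:ℤ) else 0)) % 2 = 0 := by
  rw [triAdj_iff] at hadj
  have h1 : ¬(w.1 = p₁ ∧ w.2 = p₂) := by simpa [Prod.ext_iff] using hp
  have h2 : ¬(w'.1 = p₁ ∧ w'.2 = p₂) := by simpa [Prod.ext_iff] using hp'
  have h3 : ¬(w.1 = p₁ + 1 ∧ w.2 = p₂ + 1) := by simpa [Prod.ext_iff] using hq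
  have h4 : ¬(w'.1 = p₁ + 1 ∧ w'.2 = p₂ + 1) := by simpa [Prod.ext_iff] using hq'
  simp only [crossN]
  split_ifs <;> omega

end Parity
section Parity2

/-- single-ray telescope -/
lemma crossC_telescope1 (p : ℤ × ℤ) (g : ℤ × ℤ → ℤ) (P : ℤ × ℤ → Prop)
    (hstep : ∀ w w', TriAdj w w' → P w → P w' →
      ((crossN p w w' : ℤ) + g w' - g w) % 2 = 0) :
    ∀ (l : List (ℤ × ℤ)) (w : ℤ × ℤ), IsWalk (w :: l) → (∀ x ∈ w :: l, P x) →
      ((crossC p (w :: l) : ℤ) + g ((w :: l).getLast (List.cons_ne_nil _ _)) - g w) % 2 = 0 := by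
  intro l
  induction l with
  | nil => intro w _ _; simp [crossC]
  | cons w' l ih =>
      intro w hwalk hmem
      obtain ⟨hadj, hwalk'⟩ := (isWalk_cons).1 hwalk
      have h1 := hstep w w' hadj (hmem w (by simp)) (hmem w' (by simp))
      have h2 := ih w' hwalk' (fun x hx => hmem x (by simp at hx ⊢; tauto))
      rw [List.getLast_cons (List.cons_ne_nil _ _)]
      show ((↑(crossN p w w' + crossC p (w' :: l)) : ℤ) + _ - _) % 2 = 0
      push_cast at *
      omega

/-- walk-crossing parity is unchanged when the base point moves to an adjacent
vertex, provided the walk is closed and avoids both base points. -/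
lemma cross_parity_adj (p q : ℤ × ℤ) (hadj : TriAdj p q)
    (l : List (ℤ × ℤ)) (w : ℤ × ℤ) (hwalk : IsWalk (w :: l))
    (hclosed : (w :: l).getLast (List.cons_ne_nil _ _) = w)
    (havoid : ∀ x ∈ w :: l, x ≠ p ∧ x ≠ q) :
    crossC p (w :: l) % 2 = crossC q (w :: l) % 2 := by
  have main : ∀ (g : ℤ × ℤ → ℤ),
      (∀ w₀ w₁, TriAdj w₀ w₁ → (w₀ ≠ p ∧ w₀ ≠ q) → (w₁ ≠ p ∧ w₁ ≠ q) →
        ((crossN p w₀ w₁ : ℤ) + crossN q w₀ w₁ + g w₁ - g w₀) % 2 = 0) →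
      crossC p (w :: l) % 2 = crossC q (w :: l) % 2 := by
    intro g hstep
    have := crossC_telescope p q g (fun x => x ≠ p ∧ x ≠ q) hstep l w hwalk havoid
    rw [hclosed] at this
    omega
  rw [triAdj_iff] at hadj
  have hp : p = (p.1, p.2) := rfl
  have hq2 : q = (q.1, q.2) := rfl
  obtain h | h | h | h | h | h := hadj
  · -- q = p + (1,0)
    have hq : q = (p.1 + 1, p.2) := by rw [Prod.ext_iff]; exact h
    refine main 0 (fun w₀ w₁ ha hw₀ hw₁ => ?_)
    have := step_right p.1 p.2 w₀ w₁ ha (hp ▸ hw₀.1) (hp ▸ hw₁.1)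
    rw [← hq] at this
    simpa using this
  · -- q = p - (1,0), i.e. p = q + (1,0)
    have hpq : p = (q.1 + 1, q.2) := by rw [Prod.ext_iff]; constructor <;> omega
    refine main 0 (fun w₀ w₁ ha hw₀ hw₁ => ?_)
    have := step_right q.1 q.2 w₀ w₁ ha (hq2 ▸ hw₀.2) (hq2 ▸ hw₁.2)
    rw [← hpq] at this
    simp only [Prod.mk.eta] at this
    simp only [add_zero, sub_zero, Pi.zero_apply]
    omega
  · -- q = p + (0,1)
    have hq : q = (p.1, p.2 + 1) := by rw [Prod.ext_iff]; constructor <;> omega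
    refine main (fun x => if x.2 = p.2 + 1 ∧ p.1 ≤ x.1 then (1:ℤ) else 0)
      (fun w₀ w₁ ha hw₀ hw₁ => ?_)
    have := step_up p.1 p.2 w₀ w₁ ha (hq ▸ hw₀.2) (hq ▸ hw₁.2)
    rw [← hq] at this
    exact this
  · -- q = p - (0,1), i.e. p = q + (0,1)
    have hpq : p = (q.1, q.2 + 1) := by rw [Prod.ext_iff]; constructor <;> omega
    refine main (fun x => if x.2 = q.2 + 1 ∧ q.1 ≤ x.1 then (1:ℤ) else 0)
      (fun w₀ w₁ ha hw₀ hw₁ => ?_)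
    have := step_up q.1 q.2 w₀ w₁ ha (hpq ▸ hw₀.1) (hpq ▸ hw₁.1)
    rw [← hpq] at this
    simp only [Prod.mk.eta] at this
    beta_reduce
    omega
  · -- q = p + (1,1)
    have hq : q = (p.1 + 1, p.2 + 1) := by rw [Prod.ext_iff]; exact h
    refine main (fun x => if x.2 = p.2 + 1 ∧ p.1 + 1 ≤ x.1 then (1:ℤ) else 0)
      (fun w₀ w₁ ha hw₀ hw₁ => ?_)
    have := step_diag p.1 p.2 w₀ w₁ ha (hp ▸ hw₀.1) (hp ▸ hw₁.1) (hq ▸ hw₀.2) (hq ▸ hw₁.2)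
    rw [← hq] at this
    exact this
  · -- q = p - (1,1), i.e. p = q + (1,1)
    have hpq : p = (q.1 + 1, q.2 + 1) := by rw [Prod.ext_iff]; constructor <;> omega
    refine main (fun x => if x.2 = q.2 + 1 ∧ q.1 + 1 ≤ x.1 then (1:ℤ) else 0)
      (fun w₀ w₁ ha hw₀ hw₁ => ?_)
    have := step_diag q.1 q.2 w₀ w₁ ha (hq2 ▸ hw₀.2) (hq2 ▸ hw₁.2) (hpq ▸ hw₀.1) (hpq ▸ hw₁.1)
    rw [← hpq] at this
    simp only [Prod.mk.eta] at this
    beta_reduce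
    omega

/-- crossing parity is constant along free paths, for closed walks inside σ -/
lemma cross_parity_free (σ : Config) (l : List (ℤ × ℤ)) (w : ℤ × ℤ)
    (hwalk : IsWalk (w :: l))
    (hclosed : (w :: l).getLast (List.cons_ne_nil _ _) = w)
    (hsub : ∀ x ∈ w :: l, x ∈ σ) :
    ∀ {x y : ℤ × ℤ}, Relation.ReflTransGen (Rfree σ) x y →
      crossC x (w :: l) % 2 = crossC y (w :: l) % 2 := by
  intro x y h
  induction h with
  | refl => rfl
  | @tail z z' _ hstep ih =>
      obtain ⟨hadj, hz, hz'⟩ := hstep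
      rw [ih]
      exact cross_parity_adj z z' hadj l w hwalk hclosed
        (fun t ht => ⟨fun he => hz (he ▸ hsub t ht), fun he => hz' (he ▸ hsub t ht)⟩)

/-- zero-crossing criterion -/
lemma crossC_zero (p : ℤ × ℤ) (P : ℤ × ℤ → Prop)
    (h0 : ∀ w w', TriAdj w w' → P w → P w' → crossN p w w' = 0) :
    ∀ (l : List (ℤ × ℤ)) (w : ℤ × ℤ), IsWalk (w :: l) → (∀ x ∈ w :: l, P x) →
      crossC p (w :: l) = 0 := by
  intro l
  induction l with
  | nil => intro w _ _; simp [crossC]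
  | cons w' l ih =>
      intro w hwalk hmem
      obtain ⟨hadj, hwalk'⟩ := (isWalk_cons).1 hwalk
      show crossN p w w' + crossC p (w' :: l) = 0
      rw [h0 w w' hadj (hmem w (by simp)) (hmem w' (by simp)),
        ih w' hwalk' (fun x hx => hmem x (by simp at hx ⊢; tauto))]

lemma step_far_left (p : ℤ × ℤ) (w w' : ℤ × ℤ) (hadj : TriAdj w w')
    (h1 : p.1 ≤ w.1) (h2 : p.1 ≤ w'.1) :
    ((crossN p w w' : ℤ) + (if p.2 + 1 ≤ w'.2 then (1:ℤ) else 0)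
      - (if p.2 + 1 ≤ w.2 then (1:ℤ) else 0)) % 2 = 0 := by
  rw [triAdj_iff] at hadj
  simp only [crossN]
  split_ifs <;> omega

/-- a closed walk entirely to the right of `p` crosses the ray of `p` evenly -/
lemma crossC_even_left (p : ℤ × ℤ) (l : List (ℤ × ℤ)) (w : ℤ × ℤ)
    (hwalk : IsWalk (w :: l))
    (hclosed : (w :: l).getLast (List.cons_ne_nil _ _) = w)
    (hP : ∀ x ∈ w :: l, p.1 ≤ x.1) :
    crossC p (w :: l) % 2 = 0 := by
  have := crossC_telescope1 p (fun x => if p.2 + 1 ≤ x.2 then (1:ℤ) else 0)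
    (fun x => p.1 ≤ x.1)
    (fun w₀ w₁ ha h₀ h₁ => step_far_left p w₀ w₁ ha h₀ h₁) l w hwalk hP
  rw [hclosed] at this
  omega

end Parity2
section Separation

lemma chain_mem {τ : Config} : ∀ (l : List (ℤ × ℤ)) (a : ℤ × ℤ),
    List.Chain (Rocc τ) a l → a ∈ τ → ∀ x ∈ a :: l, x ∈ τ := by
  intro l
  induction l with
  | nil => intro a _ ha x hx; simp at hx; rwa [hx]
  | cons b l ih =>
      intro a hchain ha x hx
      unfold List.Chain at hchain; rw [List.chain_cons] at hchain
      rcases List.mem_cons.1 hx with rfl | hx'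
      · exact ha
      · exact ih b hchain.2 hchain.1.2.2 x hx'

lemma chain_isWalk {τ : Config} : ∀ (l : List (ℤ × ℤ)) (a : ℤ × ℤ),
    List.Chain (Rocc τ) a l → IsWalk (a :: l) := by
  intro l
  induction l with
  | nil => intro a _; trivial
  | cons b l ih =>
      intro a hchain
      unfold List.Chain at hchain; rw [List.chain_cons] at hchain
      exact ⟨hchain.1.1, ih b hchain.2⟩

lemma isWalk_append_last : ∀ (l : List (ℤ × ℤ)) (w x : ℤ × ℤ),
    IsWalk (w :: l) → TriAdj ((w :: l).getLast (List.cons_ne_nil _ _)) x →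
    IsWalk (w :: (l ++ [x])) := by
  intro l
  induction l with
  | nil => intro w x _ h; exact ⟨h, trivial⟩
  | cons w' l ih =>
      intro w x hw h
      rw [List.getLast_cons (List.cons_ne_nil _ _)] at h
      exact ⟨hw.1, ih w' x hw.2 h⟩

lemma crossC_append_last (p : ℤ × ℤ) : ∀ (l : List (ℤ × ℤ)) (w x : ℤ × ℤ),
    crossC p (w :: (l ++ [x]))
      = crossC p (w :: l) + crossN p ((w :: l).getLast (List.cons_ne_nil _ _)) x := by
  intro l
  induction l with
  | nil => intro w x; simp [crossC]
  | cons w' l ih =>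
      intro w x
      rw [List.getLast_cons (List.cons_ne_nil _ _)]
      show crossN p w w' + crossC p (w' :: (l ++ [x])) = _
      rw [ih w' x]
      show _ = crossN p w w' + crossC p (w' :: l) + _
      ring

lemma getLast_cons_append_single (x : ℤ × ℤ) :
    ∀ (l : List (ℤ × ℤ)) (w : ℤ × ℤ),
      (w :: (l ++ [x])).getLast (List.cons_ne_nil _ _) = x := by
  intro l
  induction l with
  | nil => intro w; simp
  | cons y l ih =>
      intro w
      exact (List.getLast_cons (List.cons_ne_nil _ _)).trans (ih y)

lemma crossN_zero_inner (σ : Config) (v : ℤ × ℤ)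
    (hmax : ∀ w ∈ σ, toLex w ≤ toLex v) (hc : shift v (-1,-1) ∉ σ) :
    ∀ w w', TriAdj w w' → (w ∈ σ ∧ w ≠ v) → (w' ∈ σ ∧ w' ≠ v) →
      crossN (shift v (-1,-1)) w w' = 0 := by
  intro w w' hadj ⟨hw, hwv⟩ ⟨hw', hw'v⟩
  have l1 := hmax w hw
  have l2 := hmax w' hw'
  rw [Prod.Lex.toLex_le_toLex] at l1 l2
  have e1 : ¬(w.1 = v.1 ∧ w.2 = v.2) := by simpa [Prod.ext_iff] using hwv
  have e2 : ¬(w'.1 = v.1 ∧ w'.2 = v.2) := by simpa [Prod.ext_iff] using hw'v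
  have e3 : ¬(w.1 = v.1 + -1 ∧ w.2 = v.2 + -1) := by
    rintro ⟨hx, hy⟩
    exact hc (by rwa [show shift v (-1,-1) = (v.1 + -1, v.2 + -1) from rfl,
      show (v.1 + -1, v.2 + -1) = w from by rw [Prod.ext_iff]; exact ⟨hx.symm, hy.symm⟩])
  have e4 : ¬(w'.1 = v.1 + -1 ∧ w'.2 = v.2 + -1) := by
    rintro ⟨hx, hy⟩
    exact hc (by rwa [show shift v (-1,-1) = (v.1 + -1, v.2 + -1) from rfl,
      show (v.1 + -1, v.2 + -1) = w' from by rw [Prod.ext_iff]; exact ⟨hx.symm, hy.symm⟩])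
  rw [triAdj_iff] at hadj
  show (if _ then _ else _) = 0
  rw [if_neg]
  show ¬((w.2 = (shift v (-1,-1)).2 ∧ w'.2 = (shift v (-1,-1)).2 + 1 ∧ (shift v (-1,-1)).1 ≤ w.1)
    ∨ (w.2 = (shift v (-1,-1)).2 + 1 ∧ w'.2 = (shift v (-1,-1)).2 ∧ (shift v (-1,-1)).1 ≤ w'.1))
  show ¬((w.2 = v.2 + -1 ∧ w'.2 = v.2 + -1 + 1 ∧ v.1 + -1 ≤ w.1)
    ∨ (w.2 = v.2 + -1 + 1 ∧ w'.2 = v.2 + -1 ∧ v.1 + -1 ≤ w'.1))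
  omega

lemma separation (σ : Config) (v : ℤ × ℤ) (hv : v ∈ σ)
    (hmax : ∀ w ∈ σ, toLex w ≤ toLex v) (hhole : HoleFree σ)
    (ha : shift v (-1,0) ∈ σ) (hb : shift v (0,-1) ∈ σ) (hc : shift v (-1,-1) ∉ σ) :
    ¬ Relation.ReflTransGen (Rocc (σ.erase v)) (shift v (-1,0)) (shift v (0,-1)) := by
  intro hreach
  set a := shift v (-1,0) with hadef
  set b := shift v (0,-1) with hbdef
  set u := shift v (-1,-1) with hudef
  obtain ⟨l, hchain, hlast⟩ := List.exists_isChain_cons_of_relationReflTransGen hreach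
  have hane : a ≠ v := by simp [hadef, shift, Prod.ext_iff]
  have hmem : ∀ x ∈ a :: l, x ∈ σ.erase v :=
    chain_mem l a hchain (Finset.mem_erase.2 ⟨hane, ha⟩)
  have hwalkal : IsWalk (a :: l) := chain_isWalk l a (hchain.imp (fun _ _ h => h))
  have hadjva : TriAdj v a := by
    rw [hadef, triAdj_iff]; simp [shift]; omega
  have hadjbv : TriAdj ((a :: l).getLast (List.cons_ne_nil _ _)) v := by
    rw [hlast, hbdef, triAdj_iff]; norm_num [shift]
  -- the closed cycle W
  have hwalkW : IsWalk (v :: a :: (l ++ [v])) :=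
    ⟨hadjva, isWalk_append_last l a v hwalkal hadjbv⟩
  have hclosedW : (v :: a :: (l ++ [v])).getLast (List.cons_ne_nil _ _) = v :=
    getLast_cons_append_single v (a :: l) v
  have hsubW : ∀ x ∈ v :: a :: (l ++ [v]), x ∈ σ := by
    intro x hx
    simp only [List.mem_cons, List.mem_append, List.mem_singleton, List.not_mem_nil,
      or_false] at hx
    rcases hx with rfl | hx | hx | rfl
    · exact hv
    · exact Finset.mem_of_mem_erase (hmem x (by simp [hx]))
    · exact Finset.mem_of_mem_erase (hmem x (by simp [hx]))
    · exact hv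
  -- crossing count at u is odd
  have hχu : crossC u (v :: a :: (l ++ [v])) % 2 = 1 := by
    have h0 : crossC u (a :: l) = 0 := by
      refine crossC_zero u (fun x => x ∈ σ ∧ x ≠ v) (crossN_zero_inner σ v hmax hc)
        l a hwalkal (fun x hx => ?_)
      have hh := hmem x hx
      rw [Finset.mem_erase] at hh
      exact ⟨hh.2, hh.1⟩
    have h1 : crossN u v a = 0 := by
      rw [hudef, hadef]
      simp only [crossN, shift]
      norm_num
    have h2 : crossN u ((a :: l).getLast (List.cons_ne_nil _ _)) v = 1 := by
      rw [hlast, hudef, hbdef]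
      simp only [crossN, shift]
      norm_num
    have e : crossC u (v :: a :: (l ++ [v]))
        = crossN u v a + (crossC u (a :: l)
            + crossN u ((a :: l).getLast (List.cons_ne_nil _ _)) v) := by
      show crossN u v a + crossC u (a :: (l ++ [v])) = _
      rw [crossC_append_last]
    rw [e, h0, h1, h2]
  -- pick a far-away point in the free component of u
  obtain ⟨B, hB⟩ : ∃ B : ℤ, ∀ w ∈ σ, -B ≤ w.1 ∧ w.1 ≤ B ∧ -B ≤ w.2 ∧ w.2 ≤ B := by
    refine ⟨(σ.sup (fun w => w.1.natAbs ⊔ w.2.natAbs) : ℕ), fun w hw => ?_⟩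
    have h1 : w.1.natAbs ⊔ w.2.natAbs ≤ σ.sup (fun w => w.1.natAbs ⊔ w.2.natAbs) :=
      Finset.le_sup (f := fun w : ℤ × ℤ => w.1.natAbs ⊔ w.2.natAbs) hw
    simp only [sup_le_iff] at h1
    omega
  have hinf := hhole u hc
  obtain ⟨z, hzcomp, hzfar⟩ : ∃ z ∈ compComponent σ u,
      z ∉ (Finset.Icc (-B-2) (B+2) ×ˢ Finset.Icc (-B-2) (B+2) : Finset (ℤ × ℤ)) := by
    by_contra hcon
    push_neg at hcon
    exact hinf (Set.Finite.subset
      (Finset.Icc (-B-2) (B+2) ×ˢ Finset.Icc (-B-2) (B+2) : Finset (ℤ × ℤ)).finite_toSet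
      (fun z hz => hcon z hz))
  -- parity transport along the free path
  have hpar : crossC u (v :: a :: (l ++ [v])) % 2
      = crossC z (v :: a :: (l ++ [v])) % 2 :=
    cross_parity_free σ (a :: (l ++ [v])) v hwalkW hclosedW hsubW hzcomp
  -- the far point has even parity
  have hzcases : z.1 < -B ∨ B < z.1 ∨ z.2 < -B - 1 ∨ B + 1 < z.2 := by
    simp only [Finset.mem_product, Finset.mem_Icc] at hzfar
    omega
  have hχz : crossC z (v :: a :: (l ++ [v])) % 2 = 0 := by
    rcases hzcases with hcase | hcase | hcase | hcase
    · exact crossC_even_left z (a :: (l ++ [v])) v hwalkW hclosedW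
        (fun x hx => le_of_lt (lt_of_lt_of_le hcase (hB x (hsubW x hx)).1))
    · rw [crossC_zero z (fun x => x ∈ σ) (fun w w' _ hw hw' => by
        have b1 := hB w hw; have b2 := hB w' hw'
        simp only [crossN]
        rw [if_neg]
        omega) (a :: (l ++ [v])) v hwalkW hsubW]
    · rw [crossC_zero z (fun x => x ∈ σ) (fun w w' _ hw hw' => by
        have b1 := hB w hw; have b2 := hB w' hw'
        simp only [crossN]
        rw [if_neg]
        omega) (a :: (l ++ [v])) v hwalkW hsubW]
    · rw [crossC_zero z (fun x => x ∈ σ) (fun w w' _ hw hw' => by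
        have b1 := hB w hw; have b2 := hB w' hw'
        simp only [crossN]
        rw [if_neg]
        omega) (a :: (l ++ [v])) v hwalkW hsubW]
  omega

end Separation
section Decomp

lemma triAdj_shift (w d : ℤ × ℤ) (hd : d ∈ triNbrs) : TriAdj w (shift w d) := by
  have h : ((shift w d).1 - w.1, (shift w d).2 - w.2) = d := by
    simp [shift, Prod.ext_iff]
  unfold TriAdj
  rw [h]
  exact hd

lemma filter_dir_union (σ₁ σ₂ : Config)
    (hadj : ∀ x ∈ σ₁, ∀ y ∈ σ₂, ¬ TriAdj x y) (d : ℤ × ℤ) (hdm : d ∈ triNbrs) :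
    ((σ₁ ∪ σ₂).filter (fun w => shift w d ∈ σ₁ ∪ σ₂))
      = (σ₁.filter (fun w => shift w d ∈ σ₁)) ∪ (σ₂.filter (fun w => shift w d ∈ σ₂)) := by
  ext w
  simp only [Finset.mem_filter, Finset.mem_union]
  constructor
  · rintro ⟨hw | hw, hs | hs⟩
    · exact Or.inl ⟨hw, hs⟩
    · exact absurd (triAdj_shift w d hdm) (hadj w hw _ hs)
    · exact absurd (triAdj_symm (triAdj_shift w d hdm)) (hadj _ hs w hw)
    · exact Or.inr ⟨hw, hs⟩
  · rintro (⟨hw, hs⟩ | ⟨hw, hs⟩)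
    · exact ⟨Or.inl hw, Or.inl hs⟩
    · exact ⟨Or.inr hw, Or.inr hs⟩

lemma filter_tri_union (σ₁ σ₂ : Config)
    (hadj : ∀ x ∈ σ₁, ∀ y ∈ σ₂, ¬ TriAdj x y) (d₁ d₂ : ℤ × ℤ)
    (hdm₁ : d₁ ∈ triNbrs) (hdm₂ : d₂ ∈ triNbrs) :
    ((σ₁ ∪ σ₂).filter (fun w => shift w d₁ ∈ σ₁ ∪ σ₂ ∧ shift w d₂ ∈ σ₁ ∪ σ₂))
      = (σ₁.filter (fun w => shift w d₁ ∈ σ₁ ∧ shift w d₂ ∈ σ₁))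
        ∪ (σ₂.filter (fun w => shift w d₁ ∈ σ₂ ∧ shift w d₂ ∈ σ₂)) := by
  ext w
  simp only [Finset.mem_filter, Finset.mem_union]
  constructor
  · rintro ⟨hw | hw, hs1 | hs1, hs2 | hs2⟩
    · exact Or.inl ⟨hw, hs1, hs2⟩
    · exact absurd (triAdj_shift w d₂ hdm₂) (hadj w hw _ hs2)
    · exact absurd (triAdj_shift w d₁ hdm₁) (hadj w hw _ hs1)
    · exact absurd (triAdj_shift w d₁ hdm₁) (hadj w hw _ hs1)
    · exact absurd (triAdj_symm (triAdj_shift w d₁ hdm₁)) (hadj _ hs1 w hw)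
    · exact absurd (triAdj_symm (triAdj_shift w d₁ hdm₁)) (hadj _ hs1 w hw)
    · exact absurd (triAdj_symm (triAdj_shift w d₂ hdm₂)) (hadj _ hs2 w hw)
    · exact Or.inr ⟨hw, hs1, hs2⟩
  · rintro (⟨hw, hs1, hs2⟩ | ⟨hw, hs1, hs2⟩)
    · exact ⟨Or.inl hw, Or.inl hs1, Or.inl hs2⟩
    · exact ⟨Or.inr hw, Or.inr hs1, Or.inr hs2⟩

lemma edges_union (σ₁ σ₂ : Config) (hd : Disjoint σ₁ σ₂)
    (hadj : ∀ x ∈ σ₁, ∀ y ∈ σ₂, ¬ TriAdj x y) :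
    edges (σ₁ ∪ σ₂) = edges σ₁ + edges σ₂ := by
  unfold edges
  rw [filter_dir_union σ₁ σ₂ hadj (1,0) (by simp [triNbrs]),
    filter_dir_union σ₁ σ₂ hadj (0,1) (by simp [triNbrs]),
    filter_dir_union σ₁ σ₂ hadj (1,1) (by simp [triNbrs]),
    Finset.card_union_of_disjoint (hd.mono (Finset.filter_subset _ _) (Finset.filter_subset _ _)),
    Finset.card_union_of_disjoint (hd.mono (Finset.filter_subset _ _) (Finset.filter_subset _ _)),
    Finset.card_union_of_disjoint (hd.mono (Finset.filter_subset _ _) (Finset.filter_subset _ _))]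
  ring

lemma triangles_union (σ₁ σ₂ : Config) (hd : Disjoint σ₁ σ₂)
    (hadj : ∀ x ∈ σ₁, ∀ y ∈ σ₂, ¬ TriAdj x y) :
    triangles (σ₁ ∪ σ₂) = triangles σ₁ + triangles σ₂ := by
  unfold triangles
  rw [filter_tri_union σ₁ σ₂ hadj (1,0) (1,1) (by simp [triNbrs]) (by simp [triNbrs]),
    filter_tri_union σ₁ σ₂ hadj (0,1) (1,1) (by simp [triNbrs]) (by simp [triNbrs]),
    Finset.card_union_of_disjoint (hd.mono (Finset.filter_subset _ _) (Finset.filter_subset _ _)),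
    Finset.card_union_of_disjoint (hd.mono (Finset.filter_subset _ _) (Finset.filter_subset _ _))]
  ring

/-- truncating an occupied path at the lex-max vertex -/
lemma reach_lower (σ : Config) (v : ℤ × ℤ) (hmax : ∀ w ∈ σ, toLex w ≤ toLex v) :
    ∀ x, Relation.ReflTransGen (Rocc σ) x v → x ≠ v →
    ∃ z, (z = shift v (-1,0) ∨ z = shift v (0,-1) ∨ z = shift v (-1,-1)) ∧ z ∈ σ ∧
      Relation.ReflTransGen (Rocc (σ.erase v)) x z := by
  intro x h
  induction h using Relation.ReflTransGen.head_induction_on with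
  | refl => intro hx; exact absurd rfl hx
  | @head x' y' hstep htail ih =>
      intro hx
      by_cases hy : y' = v
      · exact ⟨x', nbr_lex σ v hmax (hy ▸ hstep.1) hstep.2.1, hstep.2.1,
          Relation.ReflTransGen.refl⟩
      · obtain ⟨z, hz1, hz2, hz3⟩ := ih hy
        exact ⟨z, hz1, hz2, Relation.ReflTransGen.head
          ⟨hstep.1, Finset.mem_erase.2 ⟨hx, hstep.2.1⟩,
            Finset.mem_erase.2 ⟨hy, hstep.2.2⟩⟩ hz3⟩

/-- paths from `a` stay in the reachable part -/
lemma reach_in_filter (τ : Config) (a : ℤ × ℤ) (S : Config)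
    (hS : ∀ w, w ∈ S ↔ w ∈ τ ∧ Relation.ReflTransGen (Rocc τ) a w) :
    ∀ y, Relation.ReflTransGen (Rocc τ) a y → Relation.ReflTransGen (Rocc S) a y := by
  intro y h
  induction h with
  | refl => exact Relation.ReflTransGen.refl
  | @tail z y' hz hstep ih =>
      exact Relation.ReflTransGen.tail ih
        ⟨hstep.1, (hS z).2 ⟨hstep.2.1, hz⟩, (hS y').2 ⟨hstep.2.2, hz.tail hstep⟩⟩

end Decomp
section Euler

lemma comp_reach {τ : Config} {w x : ℤ × ℤ} (h : Relation.ReflTransGen (Rfree τ) w x) :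
    compComponent τ x ⊆ compComponent τ w :=
  fun _ hy => Relation.ReflTransGen.trans h hy

lemma holefree_component (σ : Config) (v : ℤ × ℤ) (hhole : HoleFree σ)
    (hvr : shift v (1,0) ∉ σ)
    (τ ρ : Config) (hτ : τ ⊆ σ.erase v) (hρ : ρ ⊆ σ.erase v)
    (huni : τ ∪ ρ = σ.erase v) (hdisj : Disjoint τ ρ)
    (t : ℤ × ℤ) (htv : TriAdj t v)
    (hρconn : ∀ w ∈ ρ, Relation.ReflTransGen (Rocc ρ) t w) :
    HoleFree τ := by
  intro w hw
  have hsub : τ ⊆ σ := hτ.trans (Finset.erase_subset _ _)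
  have hinf : (compComponent σ (shift v (1,0))).Infinite := hhole _ hvr
  have hvn : v ∉ τ := fun h => (Finset.mem_erase.1 (hτ h)).1 rfl
  have hrn : shift v (1,0) ∉ τ := fun h => hvr (hsub h)
  have base : compComponent σ (shift v (1,0)) ⊆ compComponent τ (shift v (1,0)) :=
    comp_mono hsub _
  have step_v : compComponent τ (shift v (1,0)) ⊆ compComponent τ v :=
    comp_step ⟨triAdj_shift v (1,0) (by simp [triNbrs]), hvn, hrn⟩
  by_cases hwσ : w ∈ σ
  · by_cases hwv : w = v
    · rw [hwv]; exact hinf.mono (base.trans step_v)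
    · have hw' : w ∈ σ.erase v := Finset.mem_erase.2 ⟨hwv, hwσ⟩
      have hwρ : w ∈ ρ := by
        rw [← huni] at hw'
        rcases Finset.mem_union.1 hw' with h | h
        · exact absurd h hw
        · exact h
      have htw : Relation.ReflTransGen (Rocc ρ) t w := hρconn w hwρ
      have hmono : ∀ x y, Rocc ρ x y → Rfree τ x y := by
        rintro x y ⟨h1, h2, h3⟩
        exact ⟨h1, Finset.disjoint_right.1 hdisj h2, Finset.disjoint_right.1 hdisj h3⟩
      have hwt : Relation.ReflTransGen (Rfree τ) w t :=
        (rtg_symm (fun x y h => rfree_symm τ h))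
          (Relation.ReflTransGen.mono hmono _ _ htw)
      have htρ : t ∈ ρ := by
        rcases Relation.ReflTransGen.cases_head htw with heq | ⟨c, hstep, _⟩
        · rw [heq]; exact hwρ
        · exact hstep.2.1
      have step_t : compComponent τ v ⊆ compComponent τ t :=
        comp_step ⟨htv, Finset.disjoint_right.1 hdisj htρ, hvn⟩
      exact hinf.mono ((base.trans (step_v.trans step_t)).trans (comp_reach hwt))
  · exact (hhole w hwσ).mono (comp_mono hsub w)

lemma euler_aux : ∀ n : ℕ, ∀ σ : Config, σ.card ≤ n → ConnectedConfig σ → HoleFree σ →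
    σ.card + triangles σ = edges σ + 1 := by
  intro n
  induction n with
  | zero =>
      intro σ hcard hconn _
      obtain ⟨w, hw⟩ := hconn.1
      have := Finset.card_pos.2 ⟨w, hw⟩
      omega
  | succ n ih =>
      intro σ hcard hconn hhole
      classical
      obtain ⟨v, hv, hmax⟩ := Finset.exists_max_image σ toLex hconn.1
      obtain ⟨hc1, hc2, hc3⟩ := counts_at_lexmax σ v hv hmax
      by_cases hone : σ.card = 1
      · have hempty : σ.erase v = ∅ := Finset.card_eq_zero.1 (by omega)
        have key : ∀ d : ℤ × ℤ, shift v d ∉ σ ∨ shift v d = v := by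
          intro d
          by_cases h : shift v d ∈ σ
          · by_cases h2 : shift v d = v
            · exact Or.inr h2
            · exact absurd (Finset.mem_erase.2 ⟨h2, h⟩) (by simp [hempty])
          · exact Or.inl h
        have hna : shift v (-1,0) ∉ σ := by
          rcases key (-1,0) with h | h
          · exact h
          · exact absurd h (by simp [shift, Prod.ext_iff])
        have hnb : shift v (0,-1) ∉ σ := by
          rcases key (0,-1) with h | h
          · exact h
          · exact absurd h (by simp [shift, Prod.ext_iff])
        have hnc : shift v (-1,-1) ∉ σ := by
          rcases key (-1,-1) with h | h
          · exact h
          · exact absurd h (by simp [shift, Prod.ext_iff])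
        rw [hc2, hc3, hempty]
        simp [edges, triangles, hna, hnb, hnc]
        omega
      · -- at least two vertices
        have h2 : 1 < σ.card := by
          have := Finset.card_pos.2 ⟨v, hv⟩
          omega
        obtain ⟨w, hw, hwv⟩ : ∃ w ∈ σ, w ≠ v := by
          obtain ⟨x, hx, y, hy, hxy⟩ := Finset.one_lt_card.1 h2
          by_cases hxv : x = v
          · exact ⟨y, hy, fun h => hxy (hxv.trans h.symm)⟩
          · exact ⟨x, hx, hxv⟩
        have hpath : Relation.ReflTransGen (Rocc σ) w v := hconn.2 w hw v hv
        obtain ⟨z, hzcases, hzσ, _⟩ := reach_lower σ v hmax w hpath hwv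
        have hzv : z ≠ v := by
          rcases hzcases with rfl | rfl | rfl <;> simp [shift, Prod.ext_iff]
        have hz' : z ∈ σ.erase v := Finset.mem_erase.2 ⟨hzv, hzσ⟩
        have hvr : shift v (1,0) ∉ σ := lex_not_mem σ v hmax (1,0) (by norm_num)
        by_cases hbad : shift v (-1,0) ∈ σ ∧ shift v (0,-1) ∈ σ ∧ shift v (-1,-1) ∉ σ
        · -- bad case : the configuration splits in two
          obtain ⟨ha, hb, hcn⟩ := hbad
          have hsep := separation σ v hv hmax hhole ha hb hcn
          have hane : shift v (-1,0) ≠ v := by simp [shift, Prod.ext_iff]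
          have hbne : shift v (0,-1) ≠ v := by simp [shift, Prod.ext_iff]
          have ha' : shift v (-1,0) ∈ σ.erase v := Finset.mem_erase.2 ⟨hane, ha⟩
          have hb' : shift v (0,-1) ∈ σ.erase v := Finset.mem_erase.2 ⟨hbne, hb⟩
          set σ₁ := (σ.erase v).filter
            (fun w => Relation.ReflTransGen (Rocc (σ.erase v)) (shift v (-1,0)) w) with hσ₁
          set σ₂ := (σ.erase v).filter
            (fun w => Relation.ReflTransGen (Rocc (σ.erase v)) (shift v (0,-1)) w) with hσ₂
          have hm₁ : ∀ x, x ∈ σ₁ ↔ x ∈ σ.erase v ∧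
              Relation.ReflTransGen (Rocc (σ.erase v)) (shift v (-1,0)) x := by
            intro x; rw [hσ₁, Finset.mem_filter]
          have hm₂ : ∀ x, x ∈ σ₂ ↔ x ∈ σ.erase v ∧
              Relation.ReflTransGen (Rocc (σ.erase v)) (shift v (0,-1)) x := by
            intro x; rw [hσ₂, Finset.mem_filter]
          have hdisj : Disjoint σ₁ σ₂ := by
            rw [Finset.disjoint_left]
            intro x hx₁ hx₂
            exact hsep (((hm₁ x).1 hx₁).2.trans
              ((rtg_symm (fun p q h => rocc_symm _ h))
                ((hm₂ x).1 hx₂).2))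
          have hnadj : ∀ x ∈ σ₁, ∀ y ∈ σ₂, ¬ TriAdj x y := by
            intro x hx y hy hadj
            obtain ⟨hx', hax⟩ := (hm₁ x).1 hx
            obtain ⟨hy', hby⟩ := (hm₂ y).1 hy
            exact hsep ((hax.tail ⟨hadj, hx', hy'⟩).trans
              ((rtg_symm (fun p q h => rocc_symm _ h)) hby))
          have huni : σ₁ ∪ σ₂ = σ.erase v := by
            apply Finset.Subset.antisymm
            · intro x hx
              rcases Finset.mem_union.1 hx with h | h
              · exact ((hm₁ x).1 h).1
              · exact ((hm₂ x).1 h).1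
            · intro x hx
              have hxv : x ≠ v := (Finset.mem_erase.1 hx).1
              have hxσ : x ∈ σ := Finset.mem_of_mem_erase hx
              obtain ⟨z', hz'cases, hz'σ, hz'path⟩ :=
                reach_lower σ v hmax x (hconn.2 x hxσ v hv) hxv
              have hz'sym := (rtg_symm
                (fun p q h => rocc_symm _ h)) hz'path
              rcases hz'cases with rfl | rfl | rfl
              · exact Finset.mem_union_left _ ((hm₁ x).2 ⟨hx, hz'sym⟩)
              · exact Finset.mem_union_right _ ((hm₂ x).2 ⟨hx, hz'sym⟩)
              · exact absurd hz'σ hcn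
          have hsub₁ : σ₁ ⊆ σ.erase v := Finset.filter_subset _ _
          have hsub₂ : σ₂ ⊆ σ.erase v := Finset.filter_subset _ _
          have hconn₁ : ConnectedConfig σ₁ := by
            refine ⟨⟨_, (hm₁ _).2 ⟨ha', Relation.ReflTransGen.refl⟩⟩, ?_⟩
            intro x hx y hy
            have h1 := reach_in_filter (σ.erase v) (shift v (-1,0)) σ₁ hm₁ x ((hm₁ x).1 hx).2
            have h2 := reach_in_filter (σ.erase v) (shift v (-1,0)) σ₁ hm₁ y ((hm₁ y).1 hy).2
            exact ((rtg_symm (fun p q h => rocc_symm _ h)) h1).trans h2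
          have hconn₂ : ConnectedConfig σ₂ := by
            refine ⟨⟨_, (hm₂ _).2 ⟨hb', Relation.ReflTransGen.refl⟩⟩, ?_⟩
            intro x hx y hy
            have h1 := reach_in_filter (σ.erase v) (shift v (0,-1)) σ₂ hm₂ x ((hm₂ x).1 hx).2
            have h2 := reach_in_filter (σ.erase v) (shift v (0,-1)) σ₂ hm₂ y ((hm₂ y).1 hy).2
            exact ((rtg_symm (fun p q h => rocc_symm _ h)) h1).trans h2
          have htbv : TriAdj (shift v (0,-1)) v := by
            rw [triAdj_iff]; simp [shift]
          have htav : TriAdj (shift v (-1,0)) v := by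
            rw [triAdj_iff]; simp [shift]
          have hhole₁ : HoleFree σ₁ :=
            holefree_component σ v hhole hvr σ₁ σ₂ hsub₁ hsub₂ huni hdisj
              (shift v (0,-1)) htbv
              (fun w hw => reach_in_filter (σ.erase v) (shift v (0,-1)) σ₂ hm₂ w
                ((hm₂ w).1 hw).2)
          have hhole₂ : HoleFree σ₂ :=
            holefree_component σ v hhole hvr σ₂ σ₁ hsub₂ hsub₁
              (by rw [Finset.union_comm]; exact huni) hdisj.symm
              (shift v (-1,0)) htav
              (fun w hw => reach_in_filter (σ.erase v) (shift v (-1,0)) σ₁ hm₁ w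
                ((hm₁ w).1 hw).2)
          have hcard_u : (σ.erase v).card = σ₁.card + σ₂.card := by
            rw [← huni, Finset.card_union_of_disjoint hdisj]
          have hedges_u : edges (σ.erase v) = edges σ₁ + edges σ₂ := by
            rw [← huni, edges_union _ _ hdisj hnadj]
          have htri_u : triangles (σ.erase v) = triangles σ₁ + triangles σ₂ := by
            rw [← huni, triangles_union _ _ hdisj hnadj]
          have hb₁ : σ₁.card ≤ n := by
            have := Finset.card_le_card hsub₁
            have := Finset.card_erase_of_mem hv
            omega
          have hb₂ : σ₂.card ≤ n := by
            have := Finset.card_le_card hsub₂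
            have := Finset.card_erase_of_mem hv
            omega
          have hIH₁ := ih σ₁ hb₁ hconn₁ hhole₁
          have hIH₂ := ih σ₂ hb₂ hconn₂ hhole₂
          rw [if_pos ha, if_pos hb, if_neg hcn] at hc2
          rw [if_neg (fun h => hcn h.1), if_neg (fun h => hcn h.1)] at hc3
          omega
        · -- good case : erasing v keeps everything
          have hconn' : ConnectedConfig (σ.erase v) := by
            refine ⟨⟨z, hz'⟩, ?_⟩
            intro x hx y hy
            exact good_reroute σ v hmax hbad x y
              (hconn.2 x (Finset.mem_of_mem_erase hx) y (Finset.mem_of_mem_erase hy))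
              (Finset.mem_erase.1 hx).1 (Finset.mem_erase.1 hy).1
          have hhole' : HoleFree (σ.erase v) := by
            intro w hw
            by_cases hwv : w = v
            · have h1 : (compComponent σ (shift v (1,0))).Infinite := hhole _ hvr
              have hvn : v ∉ σ.erase v := by simp
              have hrn : shift v (1,0) ∉ σ.erase v :=
                fun h => hvr (Finset.mem_of_mem_erase h)
              rw [hwv]
              exact h1.mono ((comp_mono (Finset.erase_subset _ _) _).trans
                (comp_step ⟨triAdj_shift v (1,0) (by simp [triNbrs]), hvn, hrn⟩))
            · have hwσ : w ∉ σ := fun h => hw (Finset.mem_erase.2 ⟨hwv, h⟩)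
              exact (hhole w hwσ).mono (comp_mono (Finset.erase_subset _ _) w)
          have hbn : (σ.erase v).card ≤ n := by
            have := Finset.card_erase_of_mem hv
            omega
          have hIH := ih (σ.erase v) hbn hconn' hhole'
          by_cases hA : shift v (-1,0) ∈ σ
          · by_cases hB : shift v (0,-1) ∈ σ
            · by_cases hC : shift v (-1,-1) ∈ σ
              · rw [if_pos hA, if_pos hB, if_pos hC] at hc2
                rw [if_pos ⟨hC, hB⟩, if_pos ⟨hC, hA⟩] at hc3
                omega
              · exact absurd ⟨hA, hB, hC⟩ hbad
            · by_cases hC : shift v (-1,-1) ∈ σ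
              · rw [if_pos hA, if_neg hB, if_pos hC] at hc2
                rw [if_neg (fun h => hB h.2), if_pos ⟨hC, hA⟩] at hc3
                omega
              · rw [if_pos hA, if_neg hB, if_neg hC] at hc2
                rw [if_neg (fun h => hC h.1), if_neg (fun h => hC h.1)] at hc3
                omega
          · by_cases hB : shift v (0,-1) ∈ σ
            · by_cases hC : shift v (-1,-1) ∈ σ
              · rw [if_neg hA, if_pos hB, if_pos hC] at hc2
                rw [if_pos ⟨hC, hB⟩, if_neg (fun h => hA h.2)] at hc3
                omega
              · rw [if_neg hA, if_pos hB, if_neg hC] at hc2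
                rw [if_neg (fun h => hC h.1), if_neg (fun h => hC h.1)] at hc3
                omega
            · by_cases hC : shift v (-1,-1) ∈ σ
              · rw [if_neg hA, if_neg hB, if_pos hC] at hc2
                rw [if_neg (fun h => hB h.2), if_neg (fun h => hA h.2)] at hc3
                omega
              · rcases hzcases with rfl | rfl | rfl
                · exact absurd hzσ hA
                · exact absurd hzσ hB
                · exact absurd hzσ hC

end Euler
/-- if a connected hole-free configuration σ has perimeter k, then
the boundary of the corresponding union A_σ of hexagonal faces in the dual
hexagonal lattice is a (self-avoiding) polygon with exactly 2k + 6 edges. -/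
theorem dual_hex_boundary (σ : Config) (k : ℕ)
    (hconn : ConnectedConfig σ) (hhole : HoleFree σ) (hk : perim σ = k) :
    hexBoundaryEdges σ = 2 * k + 6 := by
  have h1 := hex_plus σ
  have h2 := perim_plus σ
  have h3 := euler_aux σ.card σ le_rfl hconn hhole
  omega
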